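/- Let G be a group with finite generating set and word metric, let k ≥ 0, and let (φ_q)_{q=0,…,m} be a chain endomorphism of ℤG-complexes on (C_q^k(G))_{q=0,…,m} extending the identity on ℤ. Then there exists l ≥ k and ℤG-linear maps λ_q : C_q^k(G) → C_{q+1}^l(G) for q = 0,…,m (together with λ_{−1} := 0) such that φ_q − id = ∂_{q+1}∘λ_q + λ_{q−1}∘∂_q for every q = 0,…,m; that is, (λ_q) is a chain homotopy joining (φ_q) to the identity. -/

import Mathlib

open Finsupp

variable {G : Type*} [Group G]

/-- Word length with respect to a generating set `X`. -/
noncomputable def wordLength (X : Finset G) (g : G) : ℕ :=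
  sInf {n : ℕ | ∃ w : List G, w.length = n ∧ (∀ x ∈ w, x ∈ X ∨ x⁻¹ ∈ X) ∧ w.prod = g}

/-- The left-invariant word metric `d(g,h) = l(g⁻¹h)`. -/
noncomputable def wordDist (X : Finset G) (g h : G) : ℕ :=
  wordLength X (g⁻¹ * h)

/-- `c` is a chain in `C_q^k(S)`: its support consists of `(q+1)`-tuples of elements of `S`
that are pairwise at distance at most `k`. -/
def VRChain (X : Finset G) (S : Set G) (q k : ℕ) (c : (Fin (q + 1) → G) →₀ ℤ) : Prop :=
  ∀ σ ∈ c.support, (∀ i, σ i ∈ S) ∧ ∀ i j, wordDist X (σ i) (σ j) ≤ k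

/-- The simplicial boundary map `∂_{q+1} : ℤ[G^{q+2}] → ℤ[G^{q+1}]`. -/
noncomputable def bnd (q : ℕ) :
    ((Fin (q + 2) → G) →₀ ℤ) →ₗ[ℤ] ((Fin (q + 1) → G) →₀ ℤ) :=
  Finsupp.lift _ ℤ _
    (fun σ => ∑ i : Fin (q + 2), ((-1 : ℤ) ^ (i : ℕ)) • Finsupp.single (σ ∘ i.succAbove) (1 : ℤ))

/-- The augmentation `ε : ℤ[G] → ℤ` sending every vertex to `1`. -/
noncomputable def aug : ((Fin 1 → G) →₀ ℤ) →ₗ[ℤ] ℤ :=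
  Finsupp.lift ℤ ℤ (Fin 1 → G) (fun _ => (1 : ℤ))

/-- Reduced `q`-cycles at scale `k` on `S` bound at scale `l` on `S`. -/
def BoundsAt (X : Finset G) (S : Set G) : ℕ → ℕ → ℕ → Prop
  | 0, k, l => ∀ z : (Fin 1 → G) →₀ ℤ, VRChain X S 0 k z → aug z = 0 →
      ∃ c : (Fin 2 → G) →₀ ℤ, VRChain X S 1 l c ∧ bnd 0 c = z
  | (q + 1), k, l => ∀ z : (Fin (q + 2) → G) →₀ ℤ, VRChain X S (q + 1) k z → bnd q z = 0 →
      ∃ c : (Fin (q + 3) → G) →₀ ℤ, VRChain X S (q + 2) l c ∧ bnd (q + 1) c = z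

/-- `S ⊆ G` is of type `FP_m`. -/
def TypeFP (X : Finset G) (S : Set G) (m : ℕ) : Prop :=
  ∀ q < m, ∀ k : ℕ, ∃ l ≥ k, BoundsAt X S q k l

/-- A character on `G` is a homomorphism to the additive reals. -/
def IsCharacter (χ : G → ℝ) : Prop :=
  ∀ g h : G, χ (g * h) = χ g + χ h

/-- Simultaneous left translation on chains, making `ℤ[G^{q+1}]` a `ℤG`-module. -/
noncomputable def lTranslate (g : G) (q : ℕ) :
    ((Fin (q + 1) → G) →₀ ℤ) →ₗ[ℤ] ((Fin (q + 1) → G) →₀ ℤ) :=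
  Finsupp.lmapDomain ℤ ℤ (fun σ i => g * σ i)

/-- A chain endomorphism of `ℤG`-complexes on `(C_q^k(G))_{q=0,…,m}` extending the identity
on `ℤ`: each `φ q` maps scale-`k` chains to scale-`k` chains, is `G`-equivariant,
satisfies `ε ∘ φ₀ = ε` and commutes with the boundary maps. -/
def IsChainEndo (X : Finset G) (k m : ℕ)
    (φ : ∀ q : ℕ, ((Fin (q + 1) → G) →₀ ℤ) →ₗ[ℤ] ((Fin (q + 1) → G) →₀ ℤ)) : Prop :=
  (∀ q ≤ m, ∀ c, VRChain X Set.univ q k c → VRChain X Set.univ q k (φ q c)) ∧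
  (∀ q ≤ m, ∀ (g : G) (c), VRChain X Set.univ q k c →
    φ q (lTranslate g q c) = lTranslate g q (φ q c)) ∧
  (∀ c : (Fin 1 → G) →₀ ℤ, VRChain X Set.univ 0 k c → aug (φ 0 c) = aug c) ∧
  (∀ q : ℕ, q + 1 ≤ m → ∀ c : (Fin (q + 2) → G) →₀ ℤ, VRChain X Set.univ (q + 1) k c →
    bnd q (φ (q + 1) c) = φ q (bnd q c))

/-- The valuation of a simplex: `v(σ) = min_i χ(g_i)` (with values in `EReal`). -/
noncomputable def vsimp (χ : G → ℝ) {q : ℕ} (σ : Fin (q + 1) → G) : EReal :=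
  ⨅ i, (χ (σ i) : EReal)

/-- The valuation of a chain: the minimum of the valuations of the simplices in its support
(`⊤` for the zero chain). -/
noncomputable def vchain (χ : G → ℝ) {q : ℕ} (c : (Fin (q + 1) → G) →₀ ℤ) : EReal :=
  ⨅ σ ∈ c.support, vsimp χ σ

section ChainAux

lemma lift_single {M : Type*} [AddCommGroup M] [Module ℤ M] {α : Type*} (f : α → M) (a : α) :
    (Finsupp.lift M ℤ α f) (Finsupp.single a (1 : ℤ)) = f a := by
  classical
  rw [Finsupp.lift_apply, Finsupp.sum, Finsupp.support_single_ne_zero a one_ne_zero]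
  simp
  exact (‹Module ℤ M›.toDistribMulAction.toMulAction).one_smul (f a)

lemma decomp {α : Type*} (c : α →₀ ℤ) :
    c = ∑ τ ∈ c.support, (c τ) • Finsupp.single τ (1 : ℤ) := by
  conv_lhs => rw [← Finsupp.sum_single c]
  rw [Finsupp.sum]
  exact Finset.sum_congr rfl fun τ _ => by rw [Finsupp.smul_single, smul_eq_mul, mul_one]

lemma map_eq_on_support {α : Type*} {M : Type*} [AddCommGroup M] [Module ℤ M]
    (f g : (α →₀ ℤ) →ₗ[ℤ] M) (c : α →₀ ℤ)
    (H : ∀ τ ∈ c.support, f (Finsupp.single τ 1) = g (Finsupp.single τ 1)) : f c = g c := by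
  conv_lhs => rw [decomp c]
  conv_rhs => rw [decomp c]
  rw [map_sum, map_sum]
  exact Finset.sum_congr rfl fun τ hτ => by rw [f.map_smul, g.map_smul, H τ hτ]

variable (X : Finset G)

lemma vr_zero {q K : ℕ} : VRChain X Set.univ q K (0 : (Fin (q+1) → G) →₀ ℤ) := by
  intro σ hσ; simp at hσ

lemma vr_add {q K : ℕ} {a b : (Fin (q+1) → G) →₀ ℤ} (ha : VRChain X Set.univ q K a)
    (hb : VRChain X Set.univ q K b) : VRChain X Set.univ q K (a + b) := by
  classical
  intro σ hσ
  rcases Finset.mem_union.mp (Finsupp.support_add hσ) with h | h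
  exacts [ha σ h, hb σ h]

lemma vr_smul {q K : ℕ} (z : ℤ) {a : (Fin (q+1) → G) →₀ ℤ} (ha : VRChain X Set.univ q K a) :
    VRChain X Set.univ q K (z • a) := by
  intro σ hσ
  exact ha σ (Finsupp.support_smul hσ)

lemma vr_neg {q K : ℕ} {a : (Fin (q+1) → G) →₀ ℤ} (ha : VRChain X Set.univ q K a) :
    VRChain X Set.univ q K (-a) := by
  intro σ hσ
  rw [Finsupp.support_neg] at hσ
  exact ha σ hσ

lemma vr_sub {q K : ℕ} {a b : (Fin (q+1) → G) →₀ ℤ} (ha : VRChain X Set.univ q K a)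
    (hb : VRChain X Set.univ q K b) : VRChain X Set.univ q K (a - b) := by
  rw [sub_eq_add_neg]; exact vr_add X ha (vr_neg X hb)

lemma vr_sum {q K : ℕ} {ι : Type*} (s : Finset ι) (f : ι → ((Fin (q+1) → G) →₀ ℤ))
    (H : ∀ i ∈ s, VRChain X Set.univ q K (f i)) :
    VRChain X Set.univ q K (∑ i ∈ s, f i) := by
  classical
  induction s using Finset.cons_induction with
  | empty => simpa using vr_zero X
  | cons i s his ih =>
    rw [Finset.sum_cons]
    exact vr_add X (H i (Finset.mem_cons_self i s)) (ih fun j hj => H j (Finset.mem_cons.mpr (Or.inr hj)))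

lemma vr_single {q K : ℕ} {σ : Fin (q+1) → G} (h : ∀ i j, wordDist X (σ i) (σ j) ≤ K) :
    VRChain X Set.univ q K (Finsupp.single σ (1 : ℤ)) := by
  intro τ hτ
  have := Finsupp.support_single_subset hτ
  simp only [Finset.mem_singleton] at this
  subst this
  exact ⟨fun _ => Set.mem_univ _, h⟩

lemma vr_mono {q K K' : ℕ} (hK : K ≤ K') {a : (Fin (q+1) → G) →₀ ℤ}
    (ha : VRChain X Set.univ q K a) : VRChain X Set.univ q K' a := by
  intro σ hσ
  exact ⟨(ha σ hσ).1, fun i j => le_trans ((ha σ hσ).2 i j) hK⟩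

lemma vr_map {q q' K : ℕ} (f : ((Fin (q+1) → G) →₀ ℤ) →ₗ[ℤ] ((Fin (q'+1) → G) →₀ ℤ))
    (c : (Fin (q+1) → G) →₀ ℤ)
    (H : ∀ τ ∈ c.support, VRChain X Set.univ q' K (f (Finsupp.single τ 1))) :
    VRChain X Set.univ q' K (f c) := by
  have hfc : f c = ∑ τ ∈ c.support, (c τ) • f (Finsupp.single τ 1) := by
    conv_lhs => rw [decomp c]
    rw [map_sum]
    exact Finset.sum_congr rfl fun τ _ => by rw [f.map_smul]
  rw [hfc]
  exact vr_sum X _ _ fun τ hτ => vr_smul X _ (H τ hτ)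

end ChainAux

section SimpAux

/-- The cone on a chain, at vertex `v`. -/
noncomputable def coneAt (v : G) (q : ℕ) :
    ((Fin (q + 1) → G) →₀ ℤ) →ₗ[ℤ] ((Fin (q + 2) → G) →₀ ℤ) :=
  Finsupp.lmapDomain ℤ ℤ (fun σ => Fin.cons v σ)

lemma coneAt_single (v : G) (q : ℕ) (σ : Fin (q+1) → G) :
    coneAt v q (Finsupp.single σ (1 : ℤ)) = Finsupp.single (Fin.cons v σ) 1 := by
  simp [coneAt, Finsupp.lmapDomain_apply, Finsupp.mapDomain_single]

lemma lTranslate_single (g : G) (q : ℕ) (σ : Fin (q+1) → G) :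
    lTranslate g q (Finsupp.single σ (1 : ℤ)) = Finsupp.single (fun i => g * σ i) 1 := by
  simp [lTranslate, Finsupp.lmapDomain_apply, Finsupp.mapDomain_single]

lemma bnd_single (q : ℕ) (σ : Fin (q+2) → G) :
    bnd q (Finsupp.single σ (1 : ℤ)) =
      ∑ i : Fin (q + 2), ((-1 : ℤ) ^ (i : ℕ)) • Finsupp.single (σ ∘ i.succAbove) (1 : ℤ) := by
  simp only [bnd]
  rw [lift_single]

lemma aug_single (σ : Fin 1 → G) : aug (Finsupp.single σ (1 : ℤ)) = 1 := by
  simp only [aug]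
  rw [lift_single]

lemma bnd_coneAt_single (q : ℕ) (v : G) (σ : Fin (q+2) → G) :
    bnd (q+1) (coneAt v (q+1) (Finsupp.single σ (1:ℤ)))
      = Finsupp.single σ 1 - coneAt v q (bnd q (Finsupp.single σ 1)) := by
  rw [coneAt_single, bnd_single, bnd_single, map_sum, Fin.sum_univ_succ]
  have h0 : (Fin.cons v σ ∘ (0 : Fin (q+3)).succAbove) = σ := by
    funext x
    simp [Fin.zero_succAbove, Function.comp]
  have hsucc : ∀ j : Fin (q+2),
      (Fin.cons v σ ∘ (Fin.succ j).succAbove) = Fin.cons v (σ ∘ j.succAbove) := by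
    intro j
    funext x
    induction x using Fin.cases with
    | zero => simp [Function.comp]
    | succ y => simp [Function.comp]
  rw [h0]
  simp only [Fin.val_zero, pow_zero, one_smul]
  have : ∀ j : Fin (q+2),
      ((-1:ℤ) ^ ((Fin.succ j : Fin (q+3)) : ℕ)) • Finsupp.single (Fin.cons v σ ∘ (Fin.succ j).succAbove) (1:ℤ)
        = - (coneAt v q (((-1:ℤ) ^ (j : ℕ)) • Finsupp.single (σ ∘ j.succAbove) (1:ℤ))) := by
    intro j
    rw [hsucc j, (coneAt v q).map_smul, coneAt_single, Fin.val_succ, pow_succ]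
    rw [← neg_smul]
    ring_nf
  rw [Finset.sum_congr rfl (fun j _ => this j)]
  rw [Finset.sum_neg_distrib]
  abel

end SimpAux

section SimpAux2
set_option linter.unusedSectionVars false

lemma bnd_coneAt (q : ℕ) (v : G) (c : (Fin (q+2) → G) →₀ ℤ) :
    bnd (q+1) (coneAt v (q+1) c) = c - coneAt v q (bnd q c) := by
  have := map_eq_on_support ((bnd (q+1)).comp (coneAt v (q+1)))
    (LinearMap.id - (coneAt v q).comp (bnd q)) c
    (fun τ _ => by
      simp only [LinearMap.comp_apply, LinearMap.sub_apply, LinearMap.id_apply]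
      exact bnd_coneAt_single q v τ)
  simpa using this

lemma bnd_coneAt_zero (v : G) (c : (Fin 1 → G) →₀ ℤ) :
    bnd 0 (coneAt v 0 c) = c - (aug c) • Finsupp.single (fun _ : Fin 1 => v) 1 := by
  have := map_eq_on_support ((bnd 0).comp (coneAt v 0))
    (LinearMap.id - aug.smulRight (Finsupp.single (fun _ : Fin 1 => v) 1)) c
    (fun τ _ => by
      simp only [LinearMap.comp_apply, LinearMap.sub_apply, LinearMap.id_apply,
        LinearMap.smulRight_apply]
      rw [coneAt_single, bnd_single, aug_single, one_smul, Fin.sum_univ_two]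
      have h0 : (Fin.cons v τ ∘ (0 : Fin 2).succAbove) = τ := by
        funext x
        simp [Fin.zero_succAbove, Function.comp]
      have h1 : (Fin.cons v τ ∘ (1 : Fin 2).succAbove) = fun _ : Fin 1 => v := by
        funext x
        have : x = 0 := Subsingleton.elim x 0
        subst this
        rfl
      rw [h0, h1]
      simp [sub_eq_add_neg])
  simpa [LinearMap.smulRight_apply] using this

lemma bnd_lTranslate (q : ℕ) (g : G) (c : (Fin (q+2) → G) →₀ ℤ) :
    bnd q (lTranslate g (q+1) c) = lTranslate g q (bnd q c) := by
  have := map_eq_on_support ((bnd q).comp (lTranslate g (q+1)))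
    ((lTranslate g q).comp (bnd q)) c
    (fun τ _ => by
      simp only [LinearMap.comp_apply]
      rw [lTranslate_single, bnd_single, bnd_single, map_sum]
      refine Finset.sum_congr rfl fun i _ => ?_
      rw [(lTranslate g q).map_smul, lTranslate_single]
      rfl)
  simpa using this

lemma coneAt_lTranslate (q : ℕ) (g v : G) (c : (Fin (q+1) → G) →₀ ℤ) :
    coneAt (g * v) q (lTranslate g q c) = lTranslate g (q+1) (coneAt v q c) := by
  have := map_eq_on_support ((coneAt (g * v) q).comp (lTranslate g q))
    ((lTranslate g (q+1)).comp (coneAt v q)) c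
    (fun τ _ => by
      simp only [LinearMap.comp_apply]
      rw [lTranslate_single, coneAt_single, coneAt_single, lTranslate_single]
      congr 1
      funext x
      induction x using Fin.cases with
      | zero => simp
      | succ y => simp)
  simpa using this

lemma aug_bnd (c : (Fin 2 → G) →₀ ℤ) : aug (bnd 0 c) = 0 := by
  have := map_eq_on_support (aug.comp (bnd 0)) (0 : ((Fin 2 → G) →₀ ℤ) →ₗ[ℤ] ℤ) c
    (fun τ _ => by
      simp only [LinearMap.comp_apply, LinearMap.zero_apply]
      rw [bnd_single, map_sum, Fin.sum_univ_two]
      rw [aug.map_smul, aug.map_smul, aug_single, aug_single]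
      simp)
  simpa using this

lemma single_eq_cone (q : ℕ) (σ : Fin (q+2) → G) :
    Finsupp.single σ (1:ℤ) = coneAt (σ 0) q (Finsupp.single (Fin.tail σ) 1) := by
  rw [coneAt_single, Fin.cons_self_tail]

lemma bnd_bnd (q : ℕ) (c : (Fin (q+3) → G) →₀ ℤ) : bnd q (bnd (q+1) c) = 0 := by
  induction q with
  | zero =>
    have := map_eq_on_support ((bnd 0).comp (bnd 1)) (0 : ((Fin 3 → G) →₀ ℤ) →ₗ[ℤ] _) c
      (fun τ _ => by
        simp only [LinearMap.comp_apply, LinearMap.zero_apply]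
        rw [single_eq_cone 1 τ, bnd_coneAt, map_sub, bnd_coneAt_zero]
        rw [aug_bnd]
        simp)
    simpa using this
  | succ p ih =>
    have := map_eq_on_support ((bnd (p+1)).comp (bnd (p+2))) (0 : ((Fin (p+4) → G) →₀ ℤ) →ₗ[ℤ] _) c
      (fun τ _ => by
        simp only [LinearMap.comp_apply, LinearMap.zero_apply]
        rw [single_eq_cone (p+2) τ, bnd_coneAt, map_sub, bnd_coneAt]
        rw [ih]
        simp)
    simpa using this

lemma vr_bnd (X : Finset G) {q K : ℕ} {c : (Fin (q+2) → G) →₀ ℤ}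
    (hc : VRChain X Set.univ (q+1) K c) : VRChain X Set.univ q K (bnd q c) := by
  refine vr_map X (bnd q) c (fun τ hτ => ?_)
  rw [bnd_single]
  refine vr_sum X _ _ (fun i _ => vr_smul X _ (vr_single X ?_))
  intro a b
  exact (hc τ hτ).2 _ _

end SimpAux2

section WordAux

variable (X : Finset G)

lemma exists_word (hX : Subgroup.closure (X : Set G) = ⊤) (g : G) :
    ∃ w : List G, (∀ x ∈ w, x ∈ X ∨ x⁻¹ ∈ X) ∧ w.prod = g := by
  have hg : g ∈ Subgroup.closure (X : Set G) := hX ▸ Subgroup.mem_top g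
  induction hg using Subgroup.closure_induction with
  | mem x hx => exact ⟨[x], by simpa using Or.inl hx, by simp⟩
  | one => exact ⟨[], by simp, by simp⟩
  | mul x y hx hy ihx ihy =>
    obtain ⟨w1, h1, h1p⟩ := ihx
    obtain ⟨w2, h2, h2p⟩ := ihy
    refine ⟨w1 ++ w2, ?_, by simp [h1p, h2p]⟩
    intro x hx
    rcases List.mem_append.mp hx with h | h
    · exact h1 x h
    · exact h2 x h
  | inv x hx ihx =>
    obtain ⟨w, h, hp⟩ := ihx
    refine ⟨(w.map fun x => x⁻¹).reverse, ?_, by rw [← List.prod_inv_reverse, hp]⟩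
    intro y hy
    simp only [List.mem_reverse, List.mem_map] at hy
    obtain ⟨z, hz, rfl⟩ := hy
    rcases h z hz with h' | h'
    · exact Or.inr (by simpa using h')
    · exact Or.inl h'

lemma wordLength_exists (hX : Subgroup.closure (X : Set G) = ⊤) (g : G) :
    ∃ w : List G, w.length = wordLength X g ∧ (∀ x ∈ w, x ∈ X ∨ x⁻¹ ∈ X) ∧ w.prod = g := by
  have hne : {n : ℕ | ∃ w : List G, w.length = n ∧ (∀ x ∈ w, x ∈ X ∨ x⁻¹ ∈ X) ∧ w.prod = g}.Nonempty := by
    obtain ⟨w, h1, h2⟩ := exists_word X hX g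
    exact ⟨w.length, w, rfl, h1, h2⟩
  have := Nat.sInf_mem hne
  obtain ⟨w, hw, h1, h2⟩ := this
  exact ⟨w, hw, h1, h2⟩

lemma wordLength_one : wordLength X (1 : G) = 0 :=
  Nat.le_zero.mp (Nat.sInf_le ⟨[], rfl, by simp, by simp⟩)

lemma wordDist_self (g : G) : wordDist X g g = 0 := by
  simp [wordDist, wordLength_one]

lemma ball_finite (hX : Subgroup.closure (X : Set G) = ⊤) (K : ℕ) :
    {g : G | wordLength X g ≤ K}.Finite := by
  classical
  set Y : Finset G := X ∪ X.image (fun x => x⁻¹) with hY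
  have hYfin : Finite ↥(↑Y : Set G) := by
    simpa using (Y.finite_toSet).to_subtype
  have hlist : {l : List ↥(↑Y : Set G) | l.length ≤ K}.Finite := List.finite_length_le _ K
  have himg : {g : G | wordLength X g ≤ K} ⊆
      (fun l : List ↥(↑Y : Set G) => (l.map Subtype.val).prod) '' {l | l.length ≤ K} := by
    intro g hg
    simp only [Set.mem_setOf_eq] at hg
    obtain ⟨w, hlen, hmem, hprod⟩ := wordLength_exists X hX g
    have hwY : ∀ x ∈ w, x ∈ (↑Y : Set G) := by
      intro x hx
      rcases hmem x hx with h | h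
      · simp [hY, Finset.mem_union, h]
      · simp only [hY, Finset.coe_union, Set.mem_union, Finset.coe_image, Set.mem_image]
        exact Or.inr ⟨x⁻¹, by simpa using h, by simp⟩
    refine ⟨w.attach.map fun x => (⟨x.1, hwY x.1 x.2⟩ : ↥(↑Y : Set G)), ?_, ?_⟩
    · simp only [Set.mem_setOf_eq, List.length_map, List.length_attach]
      omega
    · simp only [List.map_map]
      have : (w.attach.map fun x => ((⟨x.1, hwY x.1 x.2⟩ : ↥(↑Y : Set G)) : G)) = w := by
        simp
      rw [show ((Subtype.val ∘ fun x : {x // x ∈ w} =>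
        (⟨x.1, hwY x.1 x.2⟩ : ↥(↑Y : Set G)))) = fun x : {x // x ∈ w} => (x.1 : G) from rfl]
      simp [hprod]
  exact Set.Finite.subset (hlist.image _) himg

end WordAux

section ConeStep

lemma wordDist_translate (X : Finset G) (g a b : G) :
    wordDist X (g * a) (g * b) = wordDist X a b := by
  unfold wordDist
  congr 1
  group

lemma coneStep (X : Finset G) (hX : Subgroup.closure (X : Set G) = ⊤) (k : ℕ) {p : ℕ}
    (w : (Fin (p+1) → G) → ((Fin (p+1) → G) →₀ ℤ)) (l' : ℕ) (hl' : k ≤ l')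
    (hw1 : ∀ σ : Fin (p+1) → G, (∀ i j, wordDist X (σ i) (σ j) ≤ k) →
      VRChain X Set.univ p l' (w σ))
    (hw2 : ∀ σ : Fin (p+1) → G, (∀ i j, wordDist X (σ i) (σ j) ≤ k) → ∀ g : G,
      w (fun i => g * σ i) = lTranslate g p (w σ)) :
    ∃ l ≥ l', ∃ lam : ((Fin (p+1) → G) →₀ ℤ) →ₗ[ℤ] ((Fin (p+2) → G) →₀ ℤ),
      (∀ σ : Fin (p+1) → G, lam (Finsupp.single σ 1) = coneAt (σ 0) p (w σ)) ∧
      (∀ c, VRChain X Set.univ p k c → VRChain X Set.univ (p+1) l (lam c)) ∧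
      (∀ g c, VRChain X Set.univ p k c →
        lam (lTranslate g p c) = lTranslate g (p+1) (lam c)) := by
  classical
  set R : Set (Fin (p+1) → G) := {σ | σ 0 = 1 ∧ ∀ i j, wordDist X (σ i) (σ j) ≤ k} with hR
  have hRfin : R.Finite := by
    refine Set.Finite.subset (Set.Finite.pi (fun _ : Fin (p+1) => ball_finite X hX k)) ?_
    rintro σ ⟨h0, hk⟩
    rw [Set.mem_univ_pi]
    intro i
    have := hk 0 i
    rw [h0] at this
    simpa [wordDist] using this
  set D : ℕ := hRfin.toFinset.sup fun σ => (w σ).support.sup fun τ =>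
    Finset.univ.sup fun i : Fin (p+1) =>
      max (wordLength X (τ i)) (wordLength X (τ i)⁻¹) with hD
  -- key distance bound
  have key : ∀ σ : Fin (p+1) → G, (∀ i j, wordDist X (σ i) (σ j) ≤ k) →
      ∀ τ ∈ (w σ).support, ∀ i,
        wordDist X (σ 0) (τ i) ≤ D ∧ wordDist X (τ i) (σ 0) ≤ D := by
    intro σ hσ τ hτ i
    set rep : Fin (p+1) → G := fun i => (σ 0)⁻¹ * σ i with hrepdef
    have hrepVR : ∀ i j, wordDist X (rep i) (rep j) ≤ k := by
      intro i j
      have : wordDist X (rep i) (rep j) = wordDist X (σ i) (σ j) := by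
        have := wordDist_translate X ((σ 0)⁻¹) (σ i) (σ j)
        simpa [hrepdef] using this
      rw [this]; exact hσ i j
    have hrepR : rep ∈ R := ⟨by simp [hrepdef], hrepVR⟩
    have hw : w σ = lTranslate (σ 0) p (w rep) := by
      have hfun : (fun i => σ 0 * rep i) = σ := by
        funext i; simp [hrepdef]
      have := hw2 rep hrepVR (σ 0)
      rw [hfun] at this
      exact this
    rw [hw] at hτ
    rw [lTranslate, Finsupp.lmapDomain_apply] at hτ
    have hsupp := Finsupp.mapDomain_support hτ
    obtain ⟨ρ, hρ, rfl⟩ := Finset.mem_image.mp hsupp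
    have hDbound : max (wordLength X (ρ i)) (wordLength X (ρ i)⁻¹) ≤ D := by
      calc max (wordLength X (ρ i)) (wordLength X (ρ i)⁻¹)
          ≤ Finset.univ.sup fun j : Fin (p+1) =>
              max (wordLength X (ρ j)) (wordLength X (ρ j)⁻¹) :=
            Finset.le_sup (f := fun j : Fin (p+1) =>
              max (wordLength X (ρ j)) (wordLength X (ρ j)⁻¹)) (Finset.mem_univ i)
        _ ≤ (w rep).support.sup fun τ => Finset.univ.sup fun j : Fin (p+1) =>
              max (wordLength X (τ j)) (wordLength X (τ j)⁻¹) :=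
            Finset.le_sup (f := fun τ => Finset.univ.sup fun j : Fin (p+1) =>
              max (wordLength X (τ j)) (wordLength X (τ j)⁻¹)) hρ
        _ ≤ D := Finset.le_sup (f := fun σ => (w σ).support.sup fun τ =>
              Finset.univ.sup fun j : Fin (p+1) =>
                max (wordLength X (τ j)) (wordLength X (τ j)⁻¹))
              (hRfin.mem_toFinset.mpr hrepR)
    constructor
    · have : wordDist X (σ 0) (σ 0 * ρ i) = wordLength X (ρ i) := by
        simp [wordDist]
      rw [this]
      exact le_trans (le_max_left _ _) hDbound
    · have : wordDist X (σ 0 * ρ i) (σ 0) = wordLength X (ρ i)⁻¹ := by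
        simp [wordDist, mul_inv_rev]
      rw [this]
      exact le_trans (le_max_right _ _) hDbound
  refine ⟨max l' D, le_max_left _ _,
    Finsupp.lift ((Fin (p+2) → G) →₀ ℤ) ℤ (Fin (p+1) → G) (fun σ => coneAt (σ 0) p (w σ)),
    fun σ => lift_single _ _, ?_, ?_⟩
  · -- VR property
    intro c hc
    refine vr_map X _ c (fun τ hτ => ?_)
    rw [lift_single]
    have hτVR : ∀ i j, wordDist X (τ i) (τ j) ≤ k := (hc τ hτ).2
    intro ρ hρ
    rw [coneAt, Finsupp.lmapDomain_apply] at hρ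
    have hsupp := Finsupp.mapDomain_support hρ
    obtain ⟨υ, hυ, rfl⟩ := Finset.mem_image.mp hsupp
    refine ⟨fun _ => Set.mem_univ _, ?_⟩
    intro i j
    have hwτ := (hw1 τ hτVR) υ hυ
    induction i using Fin.cases with
    | zero =>
      induction j using Fin.cases with
      | zero => simp [wordDist_self]
      | succ b =>
        simp only [Fin.cons_zero, Fin.cons_succ]
        exact le_trans ((key τ hτVR υ hυ b).1) (le_trans (le_max_right l' D) le_rfl)
    | succ a =>
      induction j using Fin.cases with
      | zero =>
        simp only [Fin.cons_zero, Fin.cons_succ]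
        exact le_trans ((key τ hτVR υ hυ a).2) (le_max_right l' D)
      | succ b =>
        simp only [Fin.cons_succ]
        exact le_trans (hwτ.2 a b) (le_max_left l' D)
  · -- equivariance
    intro g c hc
    have := map_eq_on_support
      ((Finsupp.lift ((Fin (p+2) → G) →₀ ℤ) ℤ (Fin (p+1) → G)
          (fun σ => coneAt (σ 0) p (w σ))).comp (lTranslate g p))
      ((lTranslate g (p+1)).comp
        (Finsupp.lift ((Fin (p+2) → G) →₀ ℤ) ℤ (Fin (p+1) → G)
          (fun σ => coneAt (σ 0) p (w σ)))) c
      (fun τ hτ => by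
        simp only [LinearMap.comp_apply]
        rw [lTranslate_single, lift_single, lift_single]
        have hτVR : ∀ i j, wordDist X (τ i) (τ j) ≤ k := (hc τ hτ).2
        have : w (fun i => g * τ i) = lTranslate g p (w τ) := hw2 τ hτVR g
        rw [this]
        exact coneAt_lTranslate p g (τ 0) (w τ))
    simpa using this

end ConeStep

lemma vr_fin1 (X : Finset G) (K : ℕ) (σ : Fin 1 → G) :
    ∀ i j, wordDist X (σ i) (σ j) ≤ K := by
  intro i j
  have : i = j := Subsingleton.elim i j
  subst this
  simp [wordDist_self]


/-- Every chain endomorphism of `ℤG`-complexes on `(C_q^k(G))_{q≤m}` extending the identity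
on `ℤ` is chain homotopic to the identity, via a `ℤG`-chain homotopy `λ_q : C_q^k → C_{q+1}^l`
for some `l ≥ k`. -/
theorem stmt9 {G : Type*} [Group G] (X : Finset G)
    (hX : Subgroup.closure (X : Set G) = ⊤) (k m : ℕ)
    (φ : ∀ q : ℕ, ((Fin (q + 1) → G) →₀ ℤ) →ₗ[ℤ] ((Fin (q + 1) → G) →₀ ℤ))
    (hφ : IsChainEndo X k m φ) :
    ∃ l ≥ k, ∃ lam : ∀ q : ℕ, ((Fin (q + 1) → G) →₀ ℤ) →ₗ[ℤ] ((Fin (q + 2) → G) →₀ ℤ),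
      (∀ q ≤ m, ∀ c, VRChain X Set.univ q k c → VRChain X Set.univ (q + 1) l (lam q c)) ∧
      (∀ q ≤ m, ∀ (g : G) (c), VRChain X Set.univ q k c →
        lam q (lTranslate g q c) = lTranslate g (q + 1) (lam q c)) ∧
      (∀ c : (Fin 1 → G) →₀ ℤ, VRChain X Set.univ 0 k c →
        φ 0 c - c = bnd 0 (lam 0 c)) ∧
      (∀ q : ℕ, q + 1 ≤ m → ∀ c : (Fin (q + 2) → G) →₀ ℤ, VRChain X Set.univ (q + 1) k c →
        φ (q + 1) c - c = bnd (q + 1) (lam (q + 1) c) + lam q (bnd q c)) := by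
  classical
  obtain ⟨hφ1, hφ2, hφ3, hφ4⟩ := hφ
  suffices H : ∀ n, n ≤ m →
      ∃ l ≥ k, ∃ lam : ∀ q : ℕ, ((Fin (q + 1) → G) →₀ ℤ) →ₗ[ℤ] ((Fin (q + 2) → G) →₀ ℤ),
      (∀ q ≤ n, ∀ c, VRChain X Set.univ q k c → VRChain X Set.univ (q + 1) l (lam q c)) ∧
      (∀ q ≤ n, ∀ (g : G) (c), VRChain X Set.univ q k c →
        lam q (lTranslate g q c) = lTranslate g (q + 1) (lam q c)) ∧
      (∀ c : (Fin 1 → G) →₀ ℤ, VRChain X Set.univ 0 k c →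
        φ 0 c - c = bnd 0 (lam 0 c)) ∧
      (∀ q : ℕ, q + 1 ≤ n → ∀ c : (Fin (q + 2) → G) →₀ ℤ, VRChain X Set.univ (q + 1) k c →
        φ (q + 1) c - c = bnd (q + 1) (lam (q + 1) c) + lam q (bnd q c)) by
    obtain ⟨l, hl, lam, h1, h2, h3, h4⟩ := H m le_rfl
    exact ⟨l, hl, lam, h1, h2, h3, h4⟩
  intro n
  induction n with
  | zero =>
    intro _
    obtain ⟨l, hl, lam0, hsingle, hVR, heq⟩ := coneStep X hX k
      (fun σ : Fin 1 → G => φ 0 (Finsupp.single σ 1) - Finsupp.single σ 1) k le_rfl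
      (fun σ hσ => vr_sub X (hφ1 0 (Nat.zero_le m) _ (vr_single X hσ)) (vr_single X hσ))
      (fun σ hσ g => by
        show φ 0 (Finsupp.single (fun i => g * σ i) 1) - Finsupp.single (fun i => g * σ i) 1
            = lTranslate g 0 (φ 0 (Finsupp.single σ 1) - Finsupp.single σ 1)
        rw [← lTranslate_single g 0 σ, hφ2 0 (Nat.zero_le m) g _ (vr_single X hσ), map_sub])
    set Z : ∀ q : ℕ, ((Fin (q + 1) → G) →₀ ℤ) →ₗ[ℤ] ((Fin (q + 2) → G) →₀ ℤ) :=
      fun q => 0 with hZ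
    have e0 : Function.update Z 0 lam0 0 = lam0 := Function.update_self _ _ _
    refine ⟨l, hl, Function.update Z 0 lam0, ?_, ?_, ?_, ?_⟩
    · intro q hq c hc
      have hq0 : q = 0 := Nat.le_zero.mp hq
      subst hq0
      rw [e0]
      exact hVR c hc
    · intro q hq g c hc
      have hq0 : q = 0 := Nat.le_zero.mp hq
      subst hq0
      rw [e0]
      exact heq g c hc
    · intro c hc
      rw [e0]
      have main := map_eq_on_support (φ 0 - LinearMap.id) ((bnd 0).comp lam0) c
        (fun τ _ => by
          simp only [LinearMap.sub_apply, LinearMap.comp_apply, LinearMap.id_apply]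
          rw [hsingle τ, bnd_coneAt_zero]
          have haug : aug (φ 0 (Finsupp.single τ 1) - Finsupp.single τ 1) = 0 := by
            rw [map_sub, hφ3 _ (vr_single X (vr_fin1 X k τ)), sub_self]
          rw [haug, zero_smul, sub_zero])
      simpa using main
    · intro q hq
      exact absurd hq (by omega)
  | succ n ih =>
    intro hn1
    have hn : n ≤ m := le_trans (Nat.le_succ n) hn1
    obtain ⟨l, hl, lam, h1, h2, h3, h4⟩ := ih hn
    have hkey : ∀ σ : Fin (n+2) → G, (∀ i j, wordDist X (σ i) (σ j) ≤ k) →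
        bnd n (lam n (bnd n (Finsupp.single σ 1))) =
          φ n (bnd n (Finsupp.single σ 1)) - bnd n (Finsupp.single σ 1) := by
      intro σ hσ
      have hz : VRChain X Set.univ n k (bnd n (Finsupp.single σ 1)) :=
        vr_bnd X (vr_single X hσ)
      cases n with
      | zero => exact (h3 _ hz).symm
      | succ p =>
        have hh := h4 p le_rfl _ hz
        rw [bnd_bnd p (Finsupp.single σ 1), map_zero, add_zero] at hh
        exact hh.symm
    obtain ⟨l2, hl2, new, hsingle, hVR, heq⟩ := coneStep X hX k
      (fun σ : Fin (n+2) → G => φ (n+1) (Finsupp.single σ 1) - Finsupp.single σ 1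
        - lam n (bnd n (Finsupp.single σ 1))) l hl
      (fun σ hσ => vr_sub X
        (vr_sub X (vr_mono X hl (hφ1 (n+1) hn1 _ (vr_single X hσ)))
          (vr_mono X hl (vr_single X hσ)))
        (h1 n le_rfl _ (vr_bnd X (vr_single X hσ))))
      (fun σ hσ g => by
        show φ (n+1) (Finsupp.single (fun i => g * σ i) 1)
              - Finsupp.single (fun i => g * σ i) 1
              - lam n (bnd n (Finsupp.single (fun i => g * σ i) 1))
            = lTranslate g (n+1) (φ (n+1) (Finsupp.single σ 1) - Finsupp.single σ 1
              - lam n (bnd n (Finsupp.single σ 1)))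
        rw [← lTranslate_single g (n+1) σ, hφ2 (n+1) hn1 g _ (vr_single X hσ),
          bnd_lTranslate, h2 n le_rfl g _ (vr_bnd X (vr_single X hσ)), map_sub, map_sub])
    have eNew : Function.update lam (n+1) new (n+1) = new := Function.update_self _ _ _
    have eOld : ∀ q, q ≠ n+1 → Function.update lam (n+1) new q = lam q :=
      fun q hq => Function.update_of_ne hq _ _
    refine ⟨l2, le_trans hl hl2, Function.update lam (n+1) new, ?_, ?_, ?_, ?_⟩
    · intro q hq c hc
      by_cases hq' : q = n + 1
      · subst hq'
        rw [eNew]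
        exact hVR c hc
      · rw [eOld q hq']
        exact vr_mono X hl2 (h1 q (by omega) c hc)
    · intro q hq g c hc
      by_cases hq' : q = n + 1
      · subst hq'
        rw [eNew]
        exact heq g c hc
      · rw [eOld q hq']
        exact h2 q (by omega) g c hc
    · intro c hc
      rw [eOld 0 (by omega)]
      exact h3 c hc
    · intro q hq c hc
      by_cases hq' : q = n
      · subst hq'
        rw [eNew, eOld q (by omega)]
        have main := map_eq_on_support (φ (q+1) - LinearMap.id)
          (((bnd (q+1)).comp new) + ((lam q).comp (bnd q))) c
          (fun τ hτs => by
            have hτp : ∀ i j, wordDist X (τ i) (τ j) ≤ k := (hc τ hτs).2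
            simp only [LinearMap.sub_apply, LinearMap.add_apply, LinearMap.comp_apply,
              LinearMap.id_apply]
            rw [hsingle τ, bnd_coneAt]
            have hcyc : bnd q (φ (q + 1) (Finsupp.single τ 1) - Finsupp.single τ 1
                - lam q (bnd q (Finsupp.single τ 1))) = 0 := by
              rw [map_sub, map_sub, hφ4 q hn1 _ (vr_single X hτp), hkey τ hτp]
              abel
            rw [hcyc, map_zero, sub_zero]
            abel)
        simpa using main
      · rw [eOld (q+1) (by omega), eOld q (by omega)]
        exact h4 q (by omega) c hc
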